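/- If ā and b̄ are finite tuples of elements of P(U) that realize the same complete L₀-type in the L₀-structure induced on P(U) (which is isomorphic to M₀), then there exists an automorphism of U mapping ā to b̄. Consequently the image of the restriction homomorphism Aut(U) → Aut(P(U)) is dense: for every automorphism σ of the L₀-structure P(U) and every finite tuple ā from P(U) there is an automorphism τ of U with τ(a) = σ(a) for every coordinate a of ā. -/

import Mathlib

universe u

open FirstOrder FirstOrder.Language FirstOrder.Language.Structure CategoryTheory

namespace Ivanov

/-- The relation symbols of the finite language `L`:
four unary symbols `P`, `Q`, `λ`, `ρ`, a binary `H` and a 4-ary `S`. -/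
inductive LRel : ℕ → Type
  | P : LRel 1
  | Q : LRel 1
  | lam : LRel 1
  | rho : LRel 1
  | H : LRel 2
  | S : LRel 4

/-- The finite language `L`. -/
def L : Language := ⟨fun _ => Empty, LRel⟩

/-- The relational language having a relation symbol `Rₙ` of arity `ar n` for each
index `n ∈ s` with `0 < n`. -/
def L0r (ar : ℕ → ℕ) (s : Set ℕ) : Language :=
  ⟨fun _ => Empty, fun k => {n : ℕ // 0 < n ∧ n ∈ s ∧ ar n = k}⟩

/-- The relation symbol `Rₙ`. -/
def R (ar : ℕ → ℕ) (s : Set ℕ) (n : ℕ) (h1 : 0 < n) (h2 : n ∈ s) :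
    (L0r ar s).Relations (ar n) := ⟨n, h1, h2, rfl⟩

/-- The language `L ∪ L₀`. -/
def LFull (ar : ℕ → ℕ) (s : Set ℕ) : Language := L.sum (L0r ar s)

instance (ar : ℕ → ℕ) (s : Set ℕ) (n : ℕ) : IsEmpty ((LFull ar s).Functions n) :=
  ⟨fun f => Sum.elim Empty.elim Empty.elim f⟩

instance (ar : ℕ → ℕ) (s : Set ℕ) (n : ℕ) : IsEmpty ((L0r ar s).Functions n) :=
  ⟨fun f => Empty.elim f⟩

section

variable (ar : ℕ → ℕ) (s : Set ℕ) {M : Type u} [(LFull ar s).Structure M]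

/-- `x` satisfies the unary predicate `P`. -/
def isP (x : M) : Prop := RelMap (L := LFull ar s) (n := 1) (Sum.inl LRel.P) ![x]

/-- `x` satisfies the unary predicate `Q`. -/
def isQ (x : M) : Prop := RelMap (L := LFull ar s) (n := 1) (Sum.inl LRel.Q) ![x]

/-- `x` satisfies the unary predicate `λ`. -/
def isLam (x : M) : Prop := RelMap (L := LFull ar s) (n := 1) (Sum.inl LRel.lam) ![x]

/-- `x` satisfies the unary predicate `ρ`. -/
def isRho (x : M) : Prop := RelMap (L := LFull ar s) (n := 1) (Sum.inl LRel.rho) ![x]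

/-- the binary predicate `H`. -/
def isH (x y : M) : Prop := RelMap (L := LFull ar s) (n := 2) (Sum.inl LRel.H) ![x, y]

/-- the 4-ary predicate `S`. -/
def isS (x y z w : M) : Prop := RelMap (L := LFull ar s) (n := 4) (Sum.inl LRel.S) ![x, y, z, w]

/-- The basic conditions on the `(L ∪ L₀)`-structures under consideration: `P` and `Q`
partition the universe, `λ`, `ρ`, `H` hold only on `Q`, the `Rₙ` hold only on tuples from `P`,
and `S(a,b,c,d)` implies `a, c ∈ P`, `b, d ∈ Q`. -/
structure IsGood (M : Type u) [(LFull ar s).Structure M] : Prop where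
  part : ∀ x : M, isP ar s x ∨ isQ ar s x
  not_both : ∀ x : M, ¬(isP ar s x ∧ isQ ar s x)
  lam_q : ∀ x : M, isLam ar s x → isQ ar s x
  rho_q : ∀ x : M, isRho ar s x → isQ ar s x
  h_q : ∀ x y : M, isH ar s x y → isQ ar s x ∧ isQ ar s y
  r_p : ∀ (k : ℕ) (r : (L0r ar s).Relations k) (t : Fin k → M),
    RelMap (L := LFull ar s) (n := k) (Sum.inr r) t → ∀ i, isP ar s (t i)
  s_pq : ∀ x y z w : M, isS ar s x y z w →
    isP ar s x ∧ isQ ar s y ∧ isP ar s z ∧ isQ ar s w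

/-- `(a, c)` is an `n`-pair of arity `m` (labelling the tuple `a`). -/
structure IsNPair {M : Type u} [(LFull ar s).Structure M] (n m : ℕ)
    (a : Fin m → M) (c : Fin n → M) : Prop where
  le : m ≤ n
  aP : ∀ i, isP ar s (a i)
  cQ : ∀ j, isQ ar s (c j)
  inj : Function.Injective c
  hH : ∀ i j : Fin n, isH ar s (c i) (c j) ↔ (j : ℕ) = ((i : ℕ) + 1) % n
  hlam : ∀ i : Fin n, isLam ar s (c i) ↔ (i : ℕ) = 0
  hrho : ∀ i : Fin n, isRho ar s (c i) ↔ (i : ℕ) = m - 1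
  hS : ∀ (i k : Fin m) (j l : Fin n),
    isS ar s (a i) (c j) (a k) (c l) ↔ a i = a k

/-- The induced structure on a subset of a structure in a relational language. -/
def inducedStr (A : Set M) : (LFull ar s).Structure A where
  funMap := fun {_} f _ => isEmptyElim f
  RelMap := fun {_} r t => RelMap r fun i => (t i : M)

end

/-- The `P`-part of a structure. -/
abbrev Ppart (ar : ℕ → ℕ) (s : Set ℕ) (M : Type u) [(LFull ar s).Structure M] : Type u :=
  {x : M // isP ar s x}

/-- The `L₀`-structure induced on the `P`-part by the relations `Rₙ`. -/
instance PpartStr (ar : ℕ → ℕ) (s : Set ℕ) (M : Type u) [(LFull ar s).Structure M] :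
    (L0r ar s).Structure (Ppart ar s M) where
  funMap := fun {_} f _ => isEmptyElim f
  RelMap := fun {_} r t => RelMap (L := LFull ar s) (Sum.inr r) fun i => (t i : M)

/-- The class `K` of all finite `(L ∪ L₀)`-structures `D` satisfying the basic conditions,
whose `P`-part is isomorphic to a substructure of `M₀`, and in which, for every `n`, every
`n`-pair whose arity equals the arity of `Rₙ` labels a tuple satisfying `Rₙ`. -/
def Kclass (ar : ℕ → ℕ) (s : Set ℕ) (M₀ : Type u) [(L0r ar s).Structure M₀] :
    Set (Bundled.{u} (LFull ar s).Structure) :=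
  {D | Finite D ∧ IsGood ar s D ∧
    Nonempty (Ppart ar s D ↪[L0r ar s] M₀) ∧
    ∀ (n : ℕ) (h1 : 0 < n) (h2 : n ∈ s) (a : Fin (ar n) → D) (c : Fin n → D),
      IsNPair ar s n (ar n) a c →
        RelMap (L := LFull ar s) (n := ar n) (Sum.inr (R ar s n h1 h2)) a}

section Aux

variable (ar : ℕ → ℕ) (s : Set ℕ) {U : Type u} [(LFull ar s).Structure U]

/-- The range of a finite tuple is a substructure (the language is relational). -/
def rangeSub {k : ℕ} (x : Fin k → U) : (LFull ar s).Substructure U where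
  carrier := Set.range x
  fun_mem := fun {_} f => isEmptyElim f

lemma rangeSub_fg {k : ℕ} (x : Fin k → U) : (rangeSub ar s x).FG :=
  Substructure.fg_def.2
    ⟨Set.range x, Set.finite_range x, Substructure.closure_eq (rangeSub ar s x)⟩

lemma vec1 (w : Fin 1 → U) : w = ![w 0] := by
  funext i; fin_cases i <;> rfl

lemma vec2 (w : Fin 2 → U) : w = ![w 0, w 1] := by
  funext i; fin_cases i <;> rfl

lemma vec4 (w : Fin 4 → U) : w = ![w 0, w 1, w 2, w 3] := by
  funext i; fin_cases i <;> rfl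

variable (M₀ : Type u) [(L0r ar s).Structure M₀]

/-- Membership of finite substructures of `U` in `Kclass` implies `U` is good. -/
lemma good_of_age (hUage : (LFull ar s).age U = Kclass ar s M₀) : IsGood ar s U := by
  have key : ∀ (k : ℕ) (x : Fin k → U), IsGood ar s (rangeSub ar s x) := by
    intro k x
    have hmem : (⟨↥(rangeSub ar s x), inferInstance⟩ :
        Bundled (LFull ar s).Structure) ∈ (LFull ar s).age U :=
      ⟨(Substructure.fg_iff_structure_fg _).1 (rangeSub_fg ar s x),
        ⟨(rangeSub ar s x).subtype⟩⟩
    rw [hUage] at hmem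
    exact hmem.2.1
  -- transfer lemmas for the unary relations, via the induced structure on substructures
  have c1 : ∀ (r : LRel 1) {k : ℕ} (x : Fin k → U) (y : (rangeSub ar s x)),
      RelMap (L := LFull ar s) (n := 1) (Sum.inl r) ![y] ↔
      RelMap (L := LFull ar s) (n := 1) (Sum.inl r) ![(y : U)] := by
    intro r k x y
    have : (fun i => ((![y] : Fin 1 → (rangeSub ar s x)) i : U)) = ![(y : U)] := by
      funext i; fin_cases i <;> rfl
    exact iff_of_eq (congrArg _ this)
  have c2 : ∀ (r : LRel 2) {k : ℕ} (x : Fin k → U) (y z : (rangeSub ar s x)),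
      RelMap (L := LFull ar s) (n := 2) (Sum.inl r) ![y, z] ↔
      RelMap (L := LFull ar s) (n := 2) (Sum.inl r) ![(y : U), (z : U)] := by
    intro r k x y z
    have : (fun i => ((![y, z] : Fin 2 → (rangeSub ar s x)) i : U)) = ![(y : U), (z : U)] := by
      funext i; fin_cases i <;> rfl
    exact iff_of_eq (congrArg _ this)
  have c4 : ∀ (r : LRel 4) {k : ℕ} (x : Fin k → U) (y z w v : (rangeSub ar s x)),
      RelMap (L := LFull ar s) (n := 4) (Sum.inl r) ![y, z, w, v] ↔
      RelMap (L := LFull ar s) (n := 4) (Sum.inl r) ![(y : U), (z : U), (w : U), (v : U)] := by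
    intro r k x y z w v
    have : (fun i => ((![y, z, w, v] : Fin 4 → (rangeSub ar s x)) i : U)) =
        ![(y : U), (z : U), (w : U), (v : U)] := by
      funext i; fin_cases i <;> rfl
    exact iff_of_eq (congrArg _ this)
  constructor
  · intro x
    have g := key 1 ![x]
    have hx : x ∈ rangeSub ar s ![x] := ⟨0, rfl⟩
    rcases g.part ⟨x, hx⟩ with h | h
    · exact Or.inl ((c1 LRel.P ![x] ⟨x, hx⟩).1 h)
    · exact Or.inr ((c1 LRel.Q ![x] ⟨x, hx⟩).1 h)
  · intro x ⟨hP, hQ⟩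
    have g := key 1 ![x]
    have hx : x ∈ rangeSub ar s ![x] := ⟨0, rfl⟩
    exact g.not_both ⟨x, hx⟩ ⟨(c1 LRel.P ![x] ⟨x, hx⟩).2 hP, (c1 LRel.Q ![x] ⟨x, hx⟩).2 hQ⟩
  · intro x h
    have g := key 1 ![x]
    have hx : x ∈ rangeSub ar s ![x] := ⟨0, rfl⟩
    exact (c1 LRel.Q ![x] ⟨x, hx⟩).1 (g.lam_q ⟨x, hx⟩ ((c1 LRel.lam ![x] ⟨x, hx⟩).2 h))
  · intro x h
    have g := key 1 ![x]
    have hx : x ∈ rangeSub ar s ![x] := ⟨0, rfl⟩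
    exact (c1 LRel.Q ![x] ⟨x, hx⟩).1 (g.rho_q ⟨x, hx⟩ ((c1 LRel.rho ![x] ⟨x, hx⟩).2 h))
  · intro x y h
    have g := key 2 ![x, y]
    have hx : x ∈ rangeSub ar s ![x, y] := ⟨0, rfl⟩
    have hy : y ∈ rangeSub ar s ![x, y] := ⟨1, rfl⟩
    have := g.h_q ⟨x, hx⟩ ⟨y, hy⟩ ((c2 LRel.H ![x, y] ⟨x, hx⟩ ⟨y, hy⟩).2 h)
    exact ⟨(c1 LRel.Q ![x, y] ⟨x, hx⟩).1 this.1, (c1 LRel.Q ![x, y] ⟨y, hy⟩).1 this.2⟩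
  · intro n r t h i
    have g := key n t
    set t' : Fin n → (rangeSub ar s t) := fun i => ⟨t i, ⟨i, rfl⟩⟩ with ht'
    have hco : (fun i => ((t' i : U))) = t := rfl
    have hrel : RelMap (L := LFull ar s) (n := n) (Sum.inr r) t' := by
      show RelMap (L := LFull ar s) (n := n) (Sum.inr r) (fun i => ((t' i : U)))
      rw [hco]; exact h
    have := g.r_p n r t' hrel i
    exact (c1 LRel.P t (t' i)).1 this
  · intro x y z w h
    have g := key 4 ![x, y, z, w]
    have hx : x ∈ rangeSub ar s ![x, y, z, w] := ⟨0, rfl⟩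
    have hy : y ∈ rangeSub ar s ![x, y, z, w] := ⟨1, rfl⟩
    have hz : z ∈ rangeSub ar s ![x, y, z, w] := ⟨2, rfl⟩
    have hw : w ∈ rangeSub ar s ![x, y, z, w] := ⟨3, rfl⟩
    have := g.s_pq ⟨x, hx⟩ ⟨y, hy⟩ ⟨z, hz⟩ ⟨w, hw⟩
      ((c4 LRel.S ![x, y, z, w] ⟨x, hx⟩ ⟨y, hy⟩ ⟨z, hz⟩ ⟨w, hw⟩).2 h)
    exact ⟨(c1 LRel.P _ ⟨x, hx⟩).1 this.1, (c1 LRel.Q _ ⟨y, hy⟩).1 this.2.1,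
      (c1 LRel.P _ ⟨z, hz⟩).1 this.2.2.1, (c1 LRel.Q _ ⟨w, hw⟩).1 this.2.2.2⟩

/-- On tuples of `P`-elements, any `L`-relation is equivalent for any two tuples. -/
lemma lrel_iff (good : IsGood ar s U) {n : ℕ} (lr : LRel n) (w w' : Fin n → U)
    (hw : ∀ i, isP ar s (w i)) (hw' : ∀ i, isP ar s (w' i)) :
    RelMap (L := LFull ar s) (n := n) (Sum.inl lr) w ↔
    RelMap (L := LFull ar s) (n := n) (Sum.inl lr) w' := by
  cases lr with
  | P =>
    refine iff_of_true ?_ ?_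
    · rw [vec1 w]; exact hw 0
    · rw [vec1 w']; exact hw' 0
  | Q =>
    refine iff_of_false ?_ ?_ <;> intro h
    · rw [vec1 w] at h; exact good.not_both (w 0) ⟨hw 0, h⟩
    · rw [vec1 w'] at h; exact good.not_both (w' 0) ⟨hw' 0, h⟩
  | lam =>
    refine iff_of_false ?_ ?_ <;> intro h
    · rw [vec1 w] at h; exact good.not_both (w 0) ⟨hw 0, good.lam_q (w 0) h⟩
    · rw [vec1 w'] at h; exact good.not_both (w' 0) ⟨hw' 0, good.lam_q (w' 0) h⟩
  | rho =>
    refine iff_of_false ?_ ?_ <;> intro h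
    · rw [vec1 w] at h; exact good.not_both (w 0) ⟨hw 0, good.rho_q (w 0) h⟩
    · rw [vec1 w'] at h; exact good.not_both (w' 0) ⟨hw' 0, good.rho_q (w' 0) h⟩
  | H =>
    refine iff_of_false ?_ ?_ <;> intro h
    · rw [vec2 w] at h; exact good.not_both (w 0) ⟨hw 0, (good.h_q (w 0) (w 1) h).1⟩
    · rw [vec2 w'] at h; exact good.not_both (w' 0) ⟨hw' 0, (good.h_q (w' 0) (w' 1) h).1⟩
  | S =>
    refine iff_of_false ?_ ?_ <;> intro h
    · rw [vec4 w] at h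
      exact good.not_both (w 1) ⟨hw 1, (good.s_pq (w 0) (w 1) (w 2) (w 3) h).2.1⟩
    · rw [vec4 w'] at h
      exact good.not_both (w' 1) ⟨hw' 1, (good.s_pq (w' 0) (w' 1) (w' 2) (w' 3) h).2.1⟩

end Aux

/-- If two finite tuples from `P(U)` realize the same complete
`L₀`-type in the induced `L₀`-structure on `P(U)`, then some automorphism of `U`
maps one to the other; consequently the image of the restriction homomorphism
`Aut(U) → Aut(P(U))` is dense. -/
theorem statement_7
    (ar : ℕ → ℕ)
    (har_le : ∀ n : ℕ, 0 < n → ar n ≤ n)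
    (har_mono : ∀ m n : ℕ, 0 < m → m ≤ n → ar m ≤ ar n)
    (M₀ : Type u) [(L0r ar Set.univ).Structure M₀] [Countable M₀] [Infinite M₀]
    (hcat : Cardinal.Categorical (ℵ₀ : Cardinal.{u}) ((L0r ar Set.univ).completeTheory M₀))
    (hqe : ∀ (k : ℕ) (φ : (L0r ar Set.univ).Formula (Fin k)),
      ∃ ψ : (L0r ar Set.univ).Formula (Fin k), ψ.IsQF ∧
        ∀ a : Fin k → M₀, φ.Realize a ↔ ψ.Realize a)
    (hcomplete : ∀ (n : ℕ) (h1 : 0 < n) (a b : Fin (ar n) → M₀),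
      RelMap (R ar Set.univ n h1 (Set.mem_univ n)) a →
        RelMap (R ar Set.univ n h1 (Set.mem_univ n)) b →
        ∀ φ : (L0r ar Set.univ).Formula (Fin (ar n)), φ.Realize a ↔ φ.Realize b)
    (U : Type u) [(LFull ar Set.univ).Structure U] [Countable U] [Infinite U]
    (hUhom : (LFull ar Set.univ).IsUltrahomogeneous U)
    (hUage : (LFull ar Set.univ).age U = Kclass ar Set.univ M₀) :
    (∀ (k : ℕ) (a b : Fin k → Ppart ar Set.univ U),
      (∀ φ : (L0r ar Set.univ).Formula (Fin k), φ.Realize a ↔ φ.Realize b) →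
      ∃ τ : U ≃[LFull ar Set.univ] U, ∀ i, τ (a i : U) = ((b i : U))) ∧
    (∀ (σ : Ppart ar Set.univ U ≃[L0r ar Set.univ] Ppart ar Set.univ U)
      (k : ℕ) (a : Fin k → Ppart ar Set.univ U),
      ∃ τ : U ≃[LFull ar Set.univ] U, ∀ i, τ (a i : U) = ((σ (a i) : U))) := by
  classical
  have good : IsGood ar Set.univ U := good_of_age ar Set.univ M₀ hUage
  have part1 : ∀ (k : ℕ) (a b : Fin k → Ppart ar Set.univ U),
      (∀ φ : (L0r ar Set.univ).Formula (Fin k), φ.Realize a ↔ φ.Realize b) →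
      ∃ τ : U ≃[LFull ar Set.univ] U, ∀ i, τ (a i : U) = ((b i : U)) := by
    intro k a b h
    -- equality and relation transfer from the type hypothesis
    have heq : ∀ i j : Fin k, a i = a j ↔ b i = b j := by
      intro i j
      have := h ((Term.var i).equal (Term.var j))
      simpa using this
    have hrel : ∀ {n : ℕ} (r : (L0r ar Set.univ).Relations n) (t : Fin n → Fin k),
        RelMap (M := Ppart ar Set.univ U) r (a ∘ t) ↔
        RelMap (M := Ppart ar Set.univ U) r (b ∘ t) := by
      intro n r t
      have := h (r.formula fun i => Term.var (t i))
      simpa [Formula.realize_rel, Function.comp_def] using this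
    set A : Fin k → U := fun i => (a i : U) with hA
    set S : (LFull ar Set.univ).Substructure U := rangeSub ar Set.univ A with hS
    have memA : ∀ i, A i ∈ S := fun i => ⟨i, rfl⟩
    -- the map sending `a i` to `b i`
    have hx : ∀ x : S, ∃ i, A i = (x : U) := fun x => x.2
    set ix : S → Fin k := fun x => (hx x).choose with hix
    have hixspec : ∀ x : S, A (ix x) = (x : U) := fun x => (hx x).choose_spec
    set f0 : S → U := fun x => (b (ix x) : U) with hf0
    have key : ∀ (x : S) (i : Fin k), (x : U) = A i → f0 x = (b i : U) := by
      intro x i hxi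
      have : a (ix x) = a i := Subtype.ext (by show A (ix x) = A i; rw [hixspec x, hxi])
      have := (heq (ix x) i).1 this
      simp only [hf0, this]
    have f0inj : Function.Injective f0 := by
      intro x y hxy
      have hb : b (ix x) = b (ix y) := Subtype.ext hxy
      have ha : a (ix x) = a (ix y) := (heq (ix x) (ix y)).2 hb
      have : (x : U) = (y : U) := by
        rw [← hixspec x, ← hixspec y]
        exact congrArg Subtype.val ha
      exact Subtype.ext this
    have f0rel : ∀ {n : ℕ} (r : (LFull ar Set.univ).Relations n) (v : Fin n → S),
        RelMap (L := LFull ar Set.univ) (M := U) r (f0 ∘ v) ↔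
        RelMap (L := LFull ar Set.univ) (M := S) r v := by
      intro n r v
      set t : Fin n → Fin k := fun m => ix (v m) with hts
      have hcoe : (fun m => ((v m : U))) = fun m => A (t m) :=
        funext fun m => (hixspec (v m)).symm
      have hrhs : RelMap (L := LFull ar Set.univ) (M := S) r v ↔
          RelMap (L := LFull ar Set.univ) (M := U) r (fun m => A (t m)) := by
        show RelMap (L := LFull ar Set.univ) (M := U) r (fun m => ((v m : U))) ↔ _
        rw [hcoe]
      have hlhs : f0 ∘ v = fun m => (b (t m) : U) := rfl
      rw [hrhs, hlhs]
      cases r with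
      | inl lr =>
        exact lrel_iff ar Set.univ good lr _ _ (fun m => (b (t m)).2) (fun m => (a (t m)).2)
      | inr r0 =>
        exact (hrel r0 t).symm
    set f : S ↪[LFull ar Set.univ] U :=
      { toFun := f0
        inj' := f0inj
        map_fun' := fun {n} fn _ => isEmptyElim fn
        map_rel' := fun {n} r v => f0rel r v } with hf
    obtain ⟨g, hg⟩ := hUhom S (rangeSub_fg ar Set.univ A) f
    refine ⟨g, fun i => ?_⟩
    have h1 : f ⟨A i, memA i⟩ = g (A i) := by rw [hg]; rfl
    have h2 : f ⟨A i, memA i⟩ = (b i : U) := key ⟨A i, memA i⟩ i rfl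
    rw [← h1, h2]
  refine ⟨part1, fun σ k a => ?_⟩
  exact part1 k a (fun i => σ (a i)) fun φ => (StrongHomClass.realize_formula σ φ (v := a)).symm

end Ivanov
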